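/- For all u₁, u₂ ∈ (0,1/2) with u₁ ≤ u₂, one has J(u₂)/L(u₂) ≤ J(u₁)/L(u₁). (Equivalently, the function x ↦ J(L⁻¹(x))/x is nonincreasing on (0,∞).) -/

import Mathlib

/-- Binary entropy function. -/
noncomputable def H2 (x : ℝ) : ℝ := -x * Real.logb 2 x - (1 - x) * Real.logb 2 (1 - x)

/-- `J`, the derivative of the binary entropy function. -/
noncomputable def J (x : ℝ) : ℝ := Real.logb 2 ((1 - x) / x)

/-- `L(u) = 2·H₂(u)/(1 − 2u)` for `u ∈ [0,1/2)` (with `L(0) = 0`). -/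
noncomputable def L (u : ℝ) : ℝ := 2 * H2 u / (1 - 2 * u)

open Real

noncomputable def phi (u : ℝ) : ℝ :=
  (Real.log (1 - u) - Real.log u) * (1 - 2 * u) / (2 * Real.binEntropy u)

lemma hasDerivAt_phi {u : ℝ} (hu : u ∈ Set.Ioo (0 : ℝ) (1 / 2)) :
    HasDerivAt phi
      (((((-(1 / (1 - u)) - 1 / u) * (1 - 2 * u) +
          (Real.log (1 - u) - Real.log u) * (-2)) * (2 * Real.binEntropy u) -
        (Real.log (1 - u) - Real.log u) * (1 - 2 * u) *
          (2 * (Real.log (1 - u) - Real.log u)))) /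
      (2 * Real.binEntropy u) ^ 2) u := by
  obtain ⟨h0, h2⟩ := hu
  have h1 : u < 1 := by linarith
  have hN : HasDerivAt (fun u : ℝ => (Real.log (1 - u) - Real.log u) * (1 - 2 * u))
      ((-(1 / (1 - u)) - 1 / u) * (1 - 2 * u) +
        (Real.log (1 - u) - Real.log u) * (-2)) u := by
    have hl1 : HasDerivAt (fun u : ℝ => Real.log (1 - u)) (-(1 / (1 - u))) u := by
      have := ((hasDerivAt_id u).const_sub 1).log (by simpa using sub_ne_zero.2 h1.ne')
      simpa [div_eq_mul_inv, neg_div] using this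
    have hl2 : HasDerivAt Real.log (1 / u) u := by
      simpa [one_div] using Real.hasDerivAt_log (ne_of_gt h0)
    have hlin : HasDerivAt (fun u : ℝ => 1 - 2 * u) (-2) u := by
      simpa using ((hasDerivAt_id u).const_mul 2).const_sub 1
    exact ((hl1.sub hl2).mul hlin).congr_deriv (by simp only [Pi.sub_apply])
  have hD : HasDerivAt (fun u : ℝ => 2 * Real.binEntropy u)
      (2 * (Real.log (1 - u) - Real.log u)) u :=
    (Real.hasDerivAt_binEntropy (ne_of_gt h0) (ne_of_lt h1)).const_mul 2
  have hDne : 2 * Real.binEntropy u ≠ 0 :=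
    ne_of_gt (mul_pos two_pos (Real.binEntropy_pos h0 h1))
  exact hN.div hD hDne

lemma deriv_phi_nonpos {u : ℝ} (hu : u ∈ Set.Ioo (0 : ℝ) (1 / 2)) : deriv phi u ≤ 0 := by
  obtain ⟨h0, h2⟩ := hu
  have h1 : u < 1 := by linarith
  rw [(hasDerivAt_phi ⟨h0, h2⟩).deriv]
  have hb := Real.binEntropy_pos h0 h1
  have hj : 0 < Real.log (1 - u) - Real.log u :=
    sub_pos.2 (Real.log_lt_log h0 (by linarith))
  have h12 : 0 < 1 - 2 * u := by linarith
  apply div_nonpos_of_nonpos_of_nonneg _ (sq_nonneg _)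
  have t1 : (-(1 / (1 - u)) - 1 / u) * (1 - 2 * u) +
      (Real.log (1 - u) - Real.log u) * (-2) ≤ 0 := by
    have : 0 < 1 / (1 - u) := div_pos one_pos (by linarith)
    have : 0 < 1 / u := div_pos one_pos h0
    nlinarith
  nlinarith [mul_pos hb hj, mul_pos (mul_pos hj h12) hj]

lemma antitoneOn_phi : AntitoneOn phi (Set.Ioo (0 : ℝ) (1 / 2)) := by
  have h := antitoneOn_of_deriv_nonpos (convex_Ioo (0 : ℝ) (1 / 2))
    (fun x hx => ((hasDerivAt_phi hx).continuousAt).continuousWithinAt)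
    (fun x hx => ((hasDerivAt_phi (interior_subset (s := Set.Ioo (0:ℝ) (1/2)) hx)).differentiableAt).differentiableWithinAt)
    (fun x hx => deriv_phi_nonpos (by rwa [interior_Ioo] at hx))
  exact h

lemma JL_eq_phi {u : ℝ} (hu : u ∈ Set.Ioo (0 : ℝ) (1 / 2)) : J u / L u = phi u := by
  obtain ⟨h0, h2⟩ := hu
  have h1 : u < 1 := by linarith
  have hlog2 : Real.log 2 ≠ 0 := by
    exact ne_of_gt (Real.log_pos one_lt_two)
  have hb := Real.binEntropy_pos h0 h1
  have hH2 : H2 u = Real.binEntropy u / Real.log 2 := by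
    rw [H2, Real.binEntropy, Real.logb, Real.logb, Real.log_inv, Real.log_inv]
    field_simp
    ring
  have hJ : J u = (Real.log (1 - u) - Real.log u) / Real.log 2 := by
    rw [J, Real.logb, Real.log_div (by linarith) (ne_of_gt h0)]
  have h12 : (1 : ℝ) - 2 * u ≠ 0 := by intro h; nlinarith
  rw [hJ, L, hH2, phi]
  field_simp

theorem stmt16 (u₁ u₂ : ℝ)
    (hu₁ : u₁ ∈ Set.Ioo (0 : ℝ) (1 / 2)) (hu₂ : u₂ ∈ Set.Ioo (0 : ℝ) (1 / 2))
    (h : u₁ ≤ u₂) :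
    J u₂ / L u₂ ≤ J u₁ / L u₁ := by
  rw [JL_eq_phi hu₁, JL_eq_phi hu₂]
  exact antitoneOn_phi hu₁ hu₂ h
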